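/- arXiv:1402.3247 — 4 statements merged into one kernel-verified Lean document; each statement's English description precedes it below -/
import Mathlib

section
/- Let F ≥ 1 files have sizes S_1,…,S_F > 0, strictly decreasing popularities θ_1 > θ_2 > … > θ_F ≥ 0, and cache capacity M ≥ 0. If x is LP-feasible and has two distinct coordinates i ≠ j with 0 < x_i < 1 and 0 < x_j < 1, then x is not optimal: there exists an LP-feasible x' with r(x') > r(x). Consequently, every optimal solution of the LP relaxation has at most one non-integer coordinate. -/
/-- LP-feasibility for the LP relaxation of the single-period cache problem. -/
def LPFeasible {F : ℕ} (S : Fin F → ℝ) (M : ℝ) (x : Fin F → ℝ) : Prop :=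
  (∀ f, 0 ≤ x f ∧ x f ≤ 1) ∧ ∑ f, S f * x f ≤ M

/-- Reward of a cache vector. -/
def reward {F : ℕ} (θ S : Fin F → ℝ) (x : Fin F → ℝ) : ℝ :=
  ∑ f, θ f * S f * x f

lemma lp_improve {F : ℕ} (S θ : Fin F → ℝ) (hS : ∀ f, 0 < S f) (M : ℝ)
    (x : Fin F → ℝ) (hx : LPFeasible S M x) (i j : Fin F) (hij : i ≠ j)
    (hθ : θ j < θ i) (h1i : x i < 1) (h0j : 0 < x j) (h1j : x j ≤ 1) :
    ∃ x', LPFeasible S M x' ∧ reward θ S x < reward θ S x' := by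
  obtain ⟨hbd, hcap⟩ := hx
  set ε : ℝ := min ((1 - x i) * S i) (x j * S j) with hε
  have hε0 : 0 < ε := lt_min (mul_pos (by linarith) (hS i)) (mul_pos h0j (hS j))
  have hεi : ε / S i ≤ 1 - x i := by
    rw [div_le_iff₀ (hS i)]; exact min_le_left _ _
  have hεj : ε / S j ≤ x j := by
    rw [div_le_iff₀ (hS j)]; exact min_le_right _ _
  set x' : Fin F → ℝ :=
    fun f => x f + (if f = i then ε / S i else 0) + (if f = j then -(ε / S j) else 0)
      with hx'
  have hSsum : ∑ f, S f * x' f = ∑ f, S f * x f := by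
    simp only [hx', mul_add, Finset.sum_add_distrib, mul_ite, mul_zero, mul_neg,
      Finset.sum_ite_eq', Finset.mem_univ, if_true, Finset.sum_neg_distrib]
    rw [mul_div_cancel₀ _ (hS i).ne', mul_div_cancel₀ _ (hS j).ne']
    ring
  refine ⟨x', ⟨fun f => ?_, by rw [hSsum]; exact hcap⟩, ?_⟩
  · rcases eq_or_ne f i with rfl | hfi
    · simp only [hx', eq_self_iff_true, if_true, if_neg hij, add_zero]
      constructor
      · have := (hbd f).1
        have : 0 ≤ ε / S f := le_of_lt (div_pos hε0 (hS f))
        linarith [(hbd f).1]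
      · linarith
    · rcases eq_or_ne f j with rfl | hfj
      · simp only [hx', eq_self_iff_true, if_true, if_neg hfi, add_zero, zero_add]
        constructor
        · linarith
        · have : 0 ≤ ε / S f := le_of_lt (div_pos hε0 (hS f))
          linarith
      · simp only [hx', if_neg hfi, if_neg hfj, add_zero]
        exact hbd f
  · have : reward θ S x' = reward θ S x + (θ i - θ j) * ε := by
      simp only [reward, hx', mul_add, Finset.sum_add_distrib, mul_ite, mul_zero, mul_neg,
        Finset.sum_ite_eq', Finset.mem_univ, if_true, Finset.sum_neg_distrib]
      rw [mul_assoc (θ i), mul_div_cancel₀ _ (hS i).ne',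
        mul_assoc (θ j), mul_div_cancel₀ _ (hS j).ne']
      ring
    rw [this]
    nlinarith

/-- with strictly decreasing popularities, an LP-feasible vector
with two fractional coordinates is not optimal; hence every optimal LP solution
has at most one non-integer coordinate. -/
theorem lp_optimal_at_most_one_fractional
    (F : ℕ) (hF : 1 ≤ F) (S θ : Fin F → ℝ)
    (hS : ∀ f, 0 < S f)
    (hθdec : ∀ i j : Fin F, i < j → θ j < θ i)
    (hθ0 : ∀ f, 0 ≤ θ f)
    (M : ℝ) (hM0 : 0 ≤ M) :
    (∀ x : Fin F → ℝ, LPFeasible S M x →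
      ∀ i j : Fin F, i ≠ j → 0 < x i → x i < 1 → 0 < x j → x j < 1 →
        ∃ x', LPFeasible S M x' ∧ reward θ S x < reward θ S x') ∧
    (∀ x : Fin F → ℝ, LPFeasible S M x →
      (∀ y, LPFeasible S M y → reward θ S y ≤ reward θ S x) →
      ∀ i j : Fin F, i ≠ j →
        ¬((0 < x i ∧ x i < 1) ∧ (0 < x j ∧ x j < 1))) := by
  have key : ∀ x : Fin F → ℝ, LPFeasible S M x →
      ∀ i j : Fin F, i ≠ j → 0 < x i → x i < 1 → 0 < x j → x j < 1 →
        ∃ x', LPFeasible S M x' ∧ reward θ S x < reward θ S x' := by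
    intro x hx i j hij h0i h1i h0j h1j
    rcases lt_or_gt_of_ne hij with h | h
    · exact lp_improve S θ hS M x hx i j hij (hθdec i j h) h1i h0j h1j.le
    · exact lp_improve S θ hS M x hx j i hij.symm (hθdec j i h) h1j h0i h1i.le
  refine ⟨key, ?_⟩
  intro x hx hopt i j hij ⟨⟨h0i, h1i⟩, ⟨h0j, h1j⟩⟩
  obtain ⟨x', hx', hlt⟩ := key x hx i j hij h0i h1i h0j h1j
  exact absurd (hopt x' hx') (not_le.mpr hlt)
end

section
/- (Greedy approximation ratio under Zipf popularity.) Let F ≥ 1 files have sizes S_1,…,S_F with 0 < s_min ≤ S_f ≤ s_max for all f, and Zipf popularities θ_f = U · f^{−γ} / (Σ_{i=1}^F i^{−γ}) with U > 0 and γ ≥ 0. Let the cache capacity M satisfy s_max ≤ M < Σ_{f=1}^F S_f, and assume ⌊M/s_max⌋ + 1 ≤ F. Let n be the least index with Σ_{j=1}^n S_j > M and let the greedy vector x^G be defined by x^G_j = 1 for j < n and x^G_j = 0 for j ≥ n. Then OPT ≤ (1 + (s_max/s_min) · ⌈M/s_max⌉^{−γ} / (Σ_{i=1}^{⌊M/s_max⌋}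 i^{−γ})) · r(x^G). -/
/-- 0-1 feasibility for the single-period cache (knapsack) problem. -/
def ZOFeasible {F : ℕ} (S : Fin F → ℝ) (M : ℝ) (x : Fin F → ℝ) : Prop :=
  (∀ f, x f = 0 ∨ x f = 1) ∧ ∑ f, S f * x f ≤ M

/-- Sum over `Finset.Iio n` in `Fin F` equals a range sum. -/
lemma sum_Iio_fin_eq {F : ℕ} (n : Fin F) (g : ℕ → ℝ) :
    ∑ f ∈ Finset.Iio n, g f.val = ∑ i ∈ Finset.range n.val, g i := by
  have h1 : Finset.Iio n = Finset.univ.filter (fun f : Fin F => (f : ℕ) < (n : ℕ)) := by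
    ext f
    simp only [Finset.mem_Iio, Finset.mem_filter, Finset.mem_univ, true_and, Fin.lt_def]
  have h2 : Finset.range n.val = (Finset.range F).filter (fun i => i < (n : ℕ)) := by
    ext i
    simp only [Finset.mem_range, Finset.mem_filter]
    exact ⟨fun h => ⟨h.trans n.isLt, h⟩, fun h => h.2⟩
  rw [h1, h2, Finset.sum_filter, Finset.sum_filter,
    Fin.sum_univ_eq_sum_range (fun i => if i < (n:ℕ) then g i else 0)]

/-- Greedy approximation ratio under Zipf popularity:
`OPT ≤ (1 + (s_max/s_min) · ⌈M/s_max⌉^{-γ} / Σ_{i=1}^{⌊M/s_max⌋} i^{-γ}) · r(x^G)`.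
File `f` of the paper (1-indexed) is index `f - 1 : Fin F`, so its Zipf
popularity is `U ((f:ℕ)+1)^{-γ} / Σ_{i=1}^{F} i^{-γ}`. -/
theorem greedy_zipf_ratio
    (F : ℕ) (hF : 1 ≤ F) (S θ : Fin F → ℝ)
    (smin smax : ℝ) (hsmin : 0 < smin)
    (hSmin : ∀ f, smin ≤ S f) (hSmax : ∀ f, S f ≤ smax)
    (U γ : ℝ) (hU : 0 < U) (hγ : 0 ≤ γ)
    (hθ : ∀ f : Fin F,
      θ f = U * ((f : ℕ) + 1 : ℝ) ^ (-γ) /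
        ∑ i ∈ Finset.range F, ((i : ℝ) + 1) ^ (-γ))
    (M : ℝ) (hM : smax ≤ M) (hMlt : M < ∑ f, S f)
    (hfloor : Nat.floor (M / smax) + 1 ≤ F)
    (n : Fin F)
    (hn : M < ∑ j ∈ Finset.Iic n, S j)
    (hn_least : ∀ m : Fin F, m < n → ∑ j ∈ Finset.Iic m, S j ≤ M)
    (xG : Fin F → ℝ)
    (hxG : ∀ j, xG j = if j < n then 1 else 0) :
    ∀ y, ZOFeasible S M y →
      reward θ S y ≤
        (1 + (smax / smin) *
          ((Nat.ceil (M / smax) : ℝ) ^ (-γ) /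
            ∑ i ∈ Finset.range (Nat.floor (M / smax)), ((i : ℝ) + 1) ^ (-γ))) *
          reward θ S xG := by
  intro y hy
  obtain ⟨hy01, hyM⟩ := hy
  set Z : ℝ := ∑ i ∈ Finset.range F, ((i : ℝ) + 1) ^ (-γ) with hZdef
  have hsmax : 0 < smax := lt_of_lt_of_le hsmin ((hSmin ⟨0, hF⟩).trans (hSmax ⟨0, hF⟩))
  have hrpos : ∀ i : ℕ, (0:ℝ) < ((i : ℝ) + 1) ^ (-γ) := fun i =>
    Real.rpow_pos_of_pos (by positivity) _
  have hZ : 0 < Z := Finset.sum_pos (fun i _ => hrpos i) (by simp; omega)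
  have hθnn : ∀ f, 0 ≤ θ f := by
    intro f; rw [hθ f]; positivity
  have hθanti : ∀ f g : Fin F, f ≤ g → θ g ≤ θ f := by
    intro f g hfg
    rw [hθ f, hθ g]
    have : ((g : ℕ) + 1 : ℝ) ^ (-γ) ≤ ((f : ℕ) + 1 : ℝ) ^ (-γ) :=
      Real.rpow_le_rpow_of_nonpos (by positivity)
        (by exact_mod_cast by omega : ((f:ℕ)+1:ℝ) ≤ ((g:ℕ)+1:ℝ)) (by linarith)
    gcongr
  -- reward of greedy
  have hIio : Finset.Iio n = Finset.univ.filter (fun f : Fin F => f < n) := by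
    ext f
    simp only [Finset.mem_Iio, Finset.mem_filter, Finset.mem_univ, true_and]
  have hRG : reward θ S xG = ∑ f ∈ Finset.Iio n, θ f * S f := by
    unfold reward
    rw [hIio, Finset.sum_filter]
    apply Finset.sum_congr rfl
    intro f _
    rw [hxG f]
    by_cases h : f < n <;> simp [h]
  -- split of sums over Iio/Ici
  have hcompl : (Finset.Iio n)ᶜ = Finset.Ici n := by
    ext f; simp [not_lt]
  have hsplit : ∀ g : Fin F → ℝ,
      ∑ f, g f = ∑ f ∈ Finset.Iio n, g f + ∑ f ∈ Finset.Ici n, g f := by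
    intro g
    rw [← Finset.sum_add_sum_compl (Finset.Iio n), hcompl]
  -- fractional bound: reward y ≤ RG + θ n * (M - ∑_{Iio n} S)
  have hy01' : ∀ f, 0 ≤ y f ∧ y f ≤ 1 := by
    intro f; rcases hy01 f with h | h <;> rw [h] <;> norm_num
  have hSpos : ∀ f, 0 ≤ S f := fun f => le_trans hsmin.le (hSmin f)
  have key : reward θ S y ≤ reward θ S xG + θ n * (M - ∑ f ∈ Finset.Iio n, S f) := by
    rw [hRG]
    have h1 : ∀ f ∈ Finset.Iio n, θ f * S f * y f ≤ θ f * S f - θ n * (S f * (1 - y f)) := by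
      intro f hf
      have hfn : f ≤ n := (Finset.mem_Iio.mp hf).le
      have h1y : 0 ≤ 1 - y f := by linarith [(hy01' f).2]
      have : θ n * (S f * (1 - y f)) ≤ θ f * (S f * (1 - y f)) := by
        apply mul_le_mul_of_nonneg_right (hθanti f n hfn)
        exact mul_nonneg (hSpos f) h1y
      nlinarith [this]
    have h2 : ∀ f ∈ Finset.Ici n, θ f * S f * y f ≤ θ n * (S f * y f) := by
      intro f hf
      have hfn : n ≤ f := Finset.mem_Ici.mp hf
      rw [mul_assoc]
      exact mul_le_mul_of_nonneg_right (hθanti n f hfn)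
        (mul_nonneg (hSpos f) (hy01' f).1)
    have hb : reward θ S y ≤
        (∑ f ∈ Finset.Iio n, (θ f * S f - θ n * (S f * (1 - y f)))) +
        ∑ f ∈ Finset.Ici n, θ n * (S f * y f) := by
      unfold reward
      rw [hsplit (fun f => θ f * S f * y f)]
      exact add_le_add (Finset.sum_le_sum h1) (Finset.sum_le_sum h2)
    have hIci : ∑ f ∈ Finset.Ici n, S f * y f =
        (∑ f, S f * y f) - ∑ f ∈ Finset.Iio n, S f * y f := by
      rw [hsplit (fun f => S f * y f)]; ring
    have hone : ∑ f ∈ Finset.Iio n, S f * (1 - y f) =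
        (∑ f ∈ Finset.Iio n, S f) - ∑ f ∈ Finset.Iio n, S f * y f := by
      rw [← Finset.sum_sub_distrib]
      exact Finset.sum_congr rfl (fun f _ => by ring)
    have heq : (∑ f ∈ Finset.Iio n, (θ f * S f - θ n * (S f * (1 - y f)))) +
        ∑ f ∈ Finset.Ici n, θ n * (S f * y f) =
        (∑ f ∈ Finset.Iio n, θ f * S f) +
          θ n * ((∑ f, S f * y f) - ∑ f ∈ Finset.Iio n, S f) := by
      rw [Finset.sum_sub_distrib, ← Finset.mul_sum, ← Finset.mul_sum, hone, hIci]
      ring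
    rw [heq] at hb
    have : θ n * ((∑ f, S f * y f) - ∑ f ∈ Finset.Iio n, S f) ≤
        θ n * (M - ∑ f ∈ Finset.Iio n, S f) := by
      apply mul_le_mul_of_nonneg_left _ (hθnn n)
      linarith
    linarith
  -- M - ∑_{Iio n} S ≤ smax
  have hgap : M - ∑ f ∈ Finset.Iio n, S f ≤ smax := by
    have hins : Finset.Iic n = insert n (Finset.Iio n) := (Finset.Iio_insert n).symm
    have : ∑ j ∈ Finset.Iic n, S j = S n + ∑ f ∈ Finset.Iio n, S f := by
      rw [hins, Finset.sum_insert (by simp)]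
    have := hn
    rw [‹∑ j ∈ Finset.Iic n, S j = _›] at this
    linarith [hSmax n]
  have key2 : reward θ S y ≤ reward θ S xG + θ n * smax := by
    have := mul_le_mul_of_nonneg_left hgap (hθnn n)
    linarith
  -- now bound θ n * smax by C * reward xG
  set m₀ : ℕ := Nat.floor (M / smax) with hm₀
  have hMs1 : (1:ℝ) ≤ M / smax := (one_le_div hsmax).mpr hM
  have hm₀1 : 1 ≤ m₀ := Nat.le_floor (by exact_mod_cast hMs1)
  -- (n+1) * smax > M
  have hcard : (∑ j ∈ Finset.Iic n, S j) ≤ ((n : ℕ) + 1) * smax := by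
    have : ∑ j ∈ Finset.Iic n, S j ≤ ∑ _j ∈ Finset.Iic n, smax :=
      Finset.sum_le_sum (fun j _ => hSmax j)
    rw [Finset.sum_const, nsmul_eq_mul] at this
    have hc : (Finset.Iic n).card = (n : ℕ) + 1 := Fin.card_Iic n
    rw [hc] at this
    exact_mod_cast this
  have hMn : M < ((n : ℕ) + 1) * smax := lt_of_lt_of_le hn hcard
  have hMdiv : M / smax < ((n : ℕ) + 1 : ℝ) := by
    rw [div_lt_iff₀ hsmax]; linarith
  have hfloor_le : m₀ ≤ (n : ℕ) := by
    have h1 : (m₀ : ℝ) ≤ M / smax := Nat.floor_le (by linarith)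
    have : (m₀ : ℝ) < ((n : ℕ) + 1 : ℝ) := lt_of_le_of_lt h1 hMdiv
    exact_mod_cast Nat.lt_succ_iff.mp (by exact_mod_cast this)
  have hceil_le : Nat.ceil (M / smax) ≤ (n : ℕ) + 1 := by
    apply Nat.ceil_le.mpr
    push_cast
    linarith
  have hceil1 : 1 ≤ Nat.ceil (M / smax) := Nat.one_le_ceil_iff.mpr (by linarith)
  set A : ℝ := (Nat.ceil (M / smax) : ℝ) ^ (-γ) with hA
  set B : ℝ := ∑ i ∈ Finset.range m₀, ((i : ℝ) + 1) ^ (-γ) with hB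
  have hApos : 0 < A := Real.rpow_pos_of_pos (by exact_mod_cast hceil1) _
  have hBpos : 0 < B := Finset.sum_pos (fun i _ => hrpos i) (by simp; omega)
  set T : ℝ := ∑ i ∈ Finset.range (n : ℕ), ((i : ℝ) + 1) ^ (-γ) with hT
  -- reward xG ≥ smin * (U/Z) * T
  have hRGlb : smin * (U / Z * T) ≤ reward θ S xG := by
    rw [hRG]
    have h1 : ∀ f ∈ Finset.Iio n, θ f * smin ≤ θ f * S f := by
      intro f _
      exact mul_le_mul_of_nonneg_left (hSmin f) (hθnn f)
    have h2 : ∑ f ∈ Finset.Iio n, θ f * smin ≤ ∑ f ∈ Finset.Iio n, θ f * S f :=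
      Finset.sum_le_sum h1
    have h3 : ∑ f ∈ Finset.Iio n, θ f * smin = smin * (U / Z * T) := by
      have h4 : ∑ f ∈ Finset.Iio n, θ f
          = U / Z * ∑ f ∈ Finset.Iio n, (((f : ℕ) : ℝ) + 1) ^ (-γ) := by
        rw [Finset.mul_sum]
        exact Finset.sum_congr rfl (fun f _ => by rw [hθ f]; ring)
      rw [← Finset.sum_mul, h4, hT,
        ← sum_Iio_fin_eq n (fun i => ((i : ℝ) + 1) ^ (-γ))]
      ring
    linarith [h3 ▸ h2]
  have hθn : θ n = U / Z * (((n : ℕ) : ℝ) + 1) ^ (-γ) := by rw [hθ n]; ring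
  have hAB : (((n : ℕ) : ℝ) + 1) ^ (-γ) * B ≤ A * T := by
    have h1 : (((n : ℕ) : ℝ) + 1) ^ (-γ) ≤ A := by
      rw [hA]
      apply Real.rpow_le_rpow_of_nonpos (by exact_mod_cast hceil1)
        (by exact_mod_cast hceil_le) (by linarith)
    have h2 : B ≤ T := by
      rw [hB, hT]
      exact Finset.sum_le_sum_of_subset_of_nonneg
        (Finset.range_subset_range.mpr hfloor_le) (fun i _ _ => (hrpos i).le)
    exact mul_le_mul h1 h2 hBpos.le hApos.le
  have hfinal : θ n * smax ≤ (smax / smin) * (A / B) * reward θ S xG := by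
    have hC : (0:ℝ) ≤ smax / smin * (A / B) := by positivity
    have hUZ : (0:ℝ) < U / Z := by positivity
    calc θ n * smax = U / Z * ((((n : ℕ) : ℝ) + 1) ^ (-γ)) * smax := by rw [hθn]
      _ ≤ U / Z * (A * T / B) * smax := by
          have hle : (((n : ℕ) : ℝ) + 1) ^ (-γ) ≤ A * T / B :=
            (le_div_iff₀ hBpos).mpr hAB
          have := mul_le_mul_of_nonneg_left hle hUZ.le
          exact mul_le_mul_of_nonneg_right this hsmax.le
      _ = (smax / smin * (A / B)) * (smin * (U / Z * T)) := by
          have h0 : (smax / smin * (A / B)) * (smin * (U / Z * T)) =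
              (smin / smin) * (U / Z * (A * T / B) * smax) := by ring
          rw [h0, div_self (ne_of_gt hsmin), one_mul]
      _ ≤ (smax / smin * (A / B)) * reward θ S xG :=
          mul_le_mul_of_nonneg_left hRGlb hC
  have hexp : (1 + smax / smin * (A / B)) * reward θ S xG =
      reward θ S xG + smax / smin * (A / B) * reward θ S xG := by ring
  rw [hexp]
  linarith
end

section
/- (Asymptotic optimality of greedy for large caches.) Fix real numbers s_max ≥ s_min > 0 and γ ≥ 0. Then the approximation-ratio bound B(M) = 1 + (s_max/s_min) · ⌈M/s_max⌉^{−γ} / (Σ_{i=1}^{⌊M/s_max⌋} i^{−γ}) tends to 1 as the cache capacity M tends to infinity. -/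
open Filter

lemma zipf_aux (γ : ℝ) (hγ : 0 ≤ γ) :
    Tendsto (fun x : ℝ => (Nat.ceil x : ℝ) ^ (-γ) /
      ∑ i ∈ Finset.range (Nat.floor x), ((i : ℝ) + 1) ^ (-γ)) atTop (nhds 0) := by
  rcases eq_or_lt_of_le hγ with h0 | hpos
  · -- γ = 0
    subst h0
    simp only [neg_zero, Real.rpow_zero, Finset.sum_const, Finset.card_range,
      nsmul_eq_mul, mul_one]
    have h1 : Tendsto (fun n : ℕ => 1 / (n : ℝ)) atTop (nhds 0) :=
      tendsto_one_div_atTop_nhds_zero_nat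
    exact h1.comp tendsto_nat_floor_atTop
  · -- γ > 0
    apply squeeze_zero' (g := fun x : ℝ => x ^ (-γ))
    · filter_upwards with x
      exact div_nonneg (Real.rpow_nonneg (Nat.cast_nonneg _) _)
        (Finset.sum_nonneg fun i _ => Real.rpow_nonneg (by positivity) _)
    · filter_upwards [eventually_ge_atTop (1:ℝ)] with x hx
      have hx0 : (0:ℝ) < x := lt_of_lt_of_le one_pos hx
      have hfloor : 1 ≤ Nat.floor x := Nat.one_le_floor_iff x |>.mpr hx
      have hS : (1:ℝ) ≤ ∑ i ∈ Finset.range (Nat.floor x), ((i : ℝ) + 1) ^ (-γ) := by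
        have h0mem : 0 ∈ Finset.range (Nat.floor x) := Finset.mem_range.mpr hfloor
        have := Finset.single_le_sum
          (f := fun i : ℕ => ((i : ℝ) + 1) ^ (-γ))
          (fun i _ => Real.rpow_nonneg (by positivity) _) h0mem
        simpa using this
      have hnum : (Nat.ceil x : ℝ) ^ (-γ) ≤ x ^ (-γ) :=
        Real.rpow_le_rpow_of_nonpos hx0 (Nat.le_ceil x) (neg_nonpos.mpr hγ)
      calc (Nat.ceil x : ℝ) ^ (-γ) / ∑ i ∈ Finset.range (Nat.floor x), ((i : ℝ) + 1) ^ (-γ)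
          ≤ (Nat.ceil x : ℝ) ^ (-γ) / 1 :=
            div_le_div_of_nonneg_left (Real.rpow_nonneg (Nat.cast_nonneg _) _) one_pos hS
            |>.trans_eq rfl
        _ = (Nat.ceil x : ℝ) ^ (-γ) := div_one _
        _ ≤ x ^ (-γ) := hnum
    · exact tendsto_rpow_neg_atTop hpos

/-- Asymptotic optimality of greedy for large caches: the
approximation-ratio bound
`B(M) = 1 + (s_max/s_min) · ⌈M/s_max⌉^{-γ} / Σ_{i=1}^{⌊M/s_max⌋} i^{-γ}`
tends to `1` as `M → ∞`. -/
theorem zipf_ratio_bound_tendsto_one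
    (smin smax γ : ℝ) (hsmin : 0 < smin) (hle : smin ≤ smax) (hγ : 0 ≤ γ) :
    Filter.Tendsto
      (fun M : ℝ =>
        1 + (smax / smin) *
          ((Nat.ceil (M / smax) : ℝ) ^ (-γ) /
            ∑ i ∈ Finset.range (Nat.floor (M / smax)), ((i : ℝ) + 1) ^ (-γ)))
      Filter.atTop (nhds 1) := by
  have hsmax : 0 < smax := lt_of_lt_of_le hsmin hle
  have hdiv : Tendsto (fun M : ℝ => M / smax) atTop atTop :=
    tendsto_id.atTop_div_const hsmax
  have h := ((zipf_aux γ hγ).comp hdiv).const_mul (smax / smin)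
  rw [mul_zero] at h
  have h2 := h.const_add 1
  rw [add_zero] at h2
  exact h2
end

section
/- (Strict exchange reduces fractional coordinates without losing reward.) Let F ≥ 1 files have sizes S_1,…,S_F > 0, popularities θ_f ≥ 0, and cache capacity M ≥ 0. Suppose x is LP-feasible with two distinct coordinates i ≠ j satisfying θ_i ≥ θ_j, 0 < x_i < 1, and 0 < x_j < 1, and set S = S_i x_i + S_j x_j. Then the vector x' that agrees with x outside {i, j} and has (x'_i, x'_j) = (1, (S − S_i)/S_j) if S ≥ S_i, and (x'_i, x'_j) = (S/S_i, 0) if S < S_i, is LP-feasible, satisfies S_i x'_i + S_j x'_j = S, has at least one fewer non-integer coordinate among {i, j} than x, and satisfies r(x') ≥ r(x); moreover r(x') > r(x) whenever θ_i > θ_j. -/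
/-- Strict exchange reduces fractional coordinates without losing
reward: the explicit exchange `x'` keeping `S_i x_i + S_j x_j` constant is
LP-feasible, integralises at least one of the coordinates `i, j`, does not
decrease the reward, and strictly increases it when `θ i > θ j`. -/
theorem lp_exchange_explicit
    (F : ℕ) (hF : 1 ≤ F) (S θ : Fin F → ℝ)
    (hS : ∀ f, 0 < S f)
    (hθ0 : ∀ f, 0 ≤ θ f)
    (M : ℝ) (hM0 : 0 ≤ M)
    (i j : Fin F) (hij : i ≠ j) (hθij : θ j ≤ θ i)
    (x : Fin F → ℝ) (hx : LPFeasible S M x)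
    (hxi0 : 0 < x i) (hxi1 : x i < 1)
    (hxj0 : 0 < x j) (hxj1 : x j < 1)
    (x' : Fin F → ℝ)
    (hx'out : ∀ k, k ≠ i → k ≠ j → x' k = x k)
    (hx'ge : S i ≤ S i * x i + S j * x j →
      x' i = 1 ∧ x' j = (S i * x i + S j * x j - S i) / S j)
    (hx'lt : S i * x i + S j * x j < S i →
      x' i = (S i * x i + S j * x j) / S i ∧ x' j = 0) :
    LPFeasible S M x' ∧
    S i * x' i + S j * x' j = S i * x i + S j * x j ∧
    ((x' i = 0 ∨ x' i = 1) ∨ (x' j = 0 ∨ x' j = 1)) ∧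
    reward θ S x ≤ reward θ S x' ∧
    (θ j < θ i → reward θ S x < reward θ S x') := by
  obtain ⟨hxb, hxM⟩ := hx
  have hSi := hS i
  have hSj := hS j
  have key : ∀ c : Fin F → ℝ, ∑ f, c f * x' f =
      ∑ f, c f * x f + (c i * (x' i - x i) + c j * (x' j - x j)) := by
    intro c
    have h1 : ∑ f, (c f * x' f - c f * x f)
        = ∑ f ∈ ({i, j} : Finset (Fin F)), (c f * x' f - c f * x f) := by
      symm
      apply Finset.sum_subset (Finset.subset_univ _)
      intro f _ hf
      simp only [Finset.mem_insert, Finset.mem_singleton, not_or] at hf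
      rw [hx'out f hf.1 hf.2]; ring
    rw [Finset.sum_pair hij] at h1
    have h2 : ∑ f, (c f * x' f - c f * x f) = ∑ f, c f * x' f - ∑ f, c f * x f :=
      Finset.sum_sub_distrib _ _
    rw [h2] at h1
    linarith [h1]
  -- the key invariant and monotonicity of coordinate i
  have main : S i * x' i + S j * x' j = S i * x i + S j * x j ∧
      ((x' i = 0 ∨ x' i = 1) ∨ (x' j = 0 ∨ x' j = 1)) ∧
      (0 ≤ x' i ∧ x' i ≤ 1) ∧ (0 ≤ x' j ∧ x' j ≤ 1) ∧
      0 < S i * (x' i - x i) := by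
    by_cases hc : S i ≤ S i * x i + S j * x j
    · obtain ⟨h1, h2⟩ := hx'ge hc
      have hjv : S j * x' j = S i * x i + S j * x j - S i := by
        rw [h2]; field_simp
      refine ⟨by rw [h1]; linarith, Or.inl (Or.inr h1), ⟨by rw [h1]; norm_num, le_of_eq h1⟩,
        ⟨?_, ?_⟩, by rw [h1]; nlinarith⟩
      · rw [h2]; exact div_nonneg (by linarith) hSj.le
      · rw [h2, div_le_one hSj]; nlinarith
    · push_neg at hc
      obtain ⟨h1, h2⟩ := hx'lt hc
      have hiv : S i * x' i = S i * x i + S j * x j := by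
        rw [h1]; field_simp
      refine ⟨by rw [h2]; linarith, Or.inr (Or.inl h2),
        ⟨by rw [h1]; exact div_nonneg (by nlinarith) hSi.le, by rw [h1, div_le_one hSi]; linarith⟩,
        ⟨le_of_eq h2.symm, by rw [h2]; norm_num⟩, by nlinarith⟩
  obtain ⟨hinv, hint, hbi, hbj, hpos⟩ := main
  have hneg : S j * (x' j - x j) = -(S i * (x' i - x i)) := by nlinarith [hinv]
  refine ⟨⟨?_, ?_⟩, hinv, hint, ?_, ?_⟩
  · intro f
    by_cases hfi : f = i
    · subst hfi; exact hbi
    by_cases hfj : f = j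
    · subst hfj; exact hbj
    · rw [hx'out f hfi hfj]; exact hxb f
  · rw [key S]; nlinarith [hinv]
  · unfold reward
    rw [key (fun f => θ f * S f)]
    have : θ i * S i * (x' i - x i) + θ j * S j * (x' j - x j)
        = (θ i - θ j) * (S i * (x' i - x i)) := by
      rw [mul_assoc, mul_assoc, hneg]; ring
    nlinarith [mul_nonneg (sub_nonneg.2 hθij) (le_of_lt hpos)]
  · intro hlt
    unfold reward
    rw [key (fun f => θ f * S f)]
    have : θ i * S i * (x' i - x i) + θ j * S j * (x' j - x j)
        = (θ i - θ j) * (S i * (x' i - x i)) := by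
      rw [mul_assoc, mul_assoc, hneg]; ring
    nlinarith [mul_pos (sub_pos.2 hlt) hpos]
end
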